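/- Let x be a trajectory solution of (MTRIGS) and, for i = 1,…,m, define W_i : [t₀,∞) → ℝ by W_i(t) := f_i(x(t)) + (β/(2t^p))‖x(t)‖² + (1/2)‖ẋ(t)‖². Then for almost every t ≥ t₀ the function W_i is differentiable at t with W_i'(t) ≤ −(pβ/(2t^{p+1}))‖x(t)‖² − (α/t^q)‖ẋ(t)‖² ≤ 0. Consequently each W_i is nonincreasing on [t₀,∞), and x(t) ∈ L(F, F(x(t₀)) + a) for all t ≥ t₀, where a ∈ ℝ^m is given by a_i := (β/(2t₀^p))‖x(t₀)‖² + (1/2)‖ẋ(t₀)‖² for every i. -/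

import Mathlib

open Filter Topology MeasureTheory
open scoped NNReal InnerProductSpace

set_option maxHeartbeats 1000000 in
lemma key_ac {H : Type*} [NormedAddCommGroup H] [InnerProductSpace ℝ H] [CompleteSpace H]
    (g : ℝ → H) (a b : ℝ) (hab : a ≤ b) (c : H)
    (hg : IntegrableOn g (Set.Ioc a b))
    (y : ℝ → H) (hy : ∀ r ∈ Set.Icc a b, y r = c + ∫ u in a..r, g u) :
    ‖y b‖ ^ 2 / 2 - ‖y a‖ ^ 2 / 2 = ∫ u in a..b, ⟪g u, y u⟫_ℝ := by
  set G : ℝ → H := (Set.Ioc a b).indicator g with hG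
  have hGint : Integrable G := (integrable_indicator_iff measurableSet_Ioc).2 hg
  have hya : y a = c := by simpa using hy a (Set.left_mem_Icc.2 hab)
  set Ig : ℝ := ∫ u in Set.Ioc a b, ‖g u‖ with hIg
  have hIg0 : 0 ≤ Ig := integral_nonneg fun u => norm_nonneg _
  set B : ℝ := ‖c‖ + Ig with hB
  have hB0 : 0 ≤ B := add_nonneg (norm_nonneg _) hIg0
  have hgnorm : IntegrableOn (fun u => ‖g u‖) (Set.Ioc a b) := hg.norm
  have hyB : ∀ r ∈ Set.Icc a b, ‖y r‖ ≤ B := by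
    intro r hr
    rw [hy r hr]
    refine (norm_add_le _ _).trans (add_le_add le_rfl ?_)
    calc ‖∫ u in a..r, g u‖ ≤ ∫ u in Set.Ioc a r, ‖g u‖ := by
          rw [intervalIntegral.integral_of_le hr.1]
          exact norm_integral_le_integral_norm _
      _ ≤ Ig := by
          refine setIntegral_mono_set hgnorm ?_ ?_
          · exact Eventually.of_forall fun u => norm_nonneg _
          · exact HasSubset.Subset.eventuallyLE (Set.Ioc_subset_Ioc_right hr.2)
  have hgIcc : IntegrableOn g (Set.Icc a b) := by
    rwa [integrableOn_Icc_iff_integrableOn_Ioc]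
  have hycont : ContinuousOn y (Set.Icc a b) := by
    have h1 : IntegrableOn g (Set.uIcc a b) := by rwa [Set.uIcc_of_le hab]
    have h2 := intervalIntegral.continuousOn_primitive_interval (μ := volume) h1
    rw [Set.uIcc_of_le hab] at h2
    exact (continuousOn_const.add h2).congr fun r hr => hy r hr
  have hymeas : AEStronglyMeasurable y (volume.restrict (Set.Ioc a b)) :=
    (hycont.mono Set.Ioc_subset_Icc_self).aestronglyMeasurable measurableSet_Ioc
  have hinner_int : IntegrableOn (fun u => ⟪g u, y u⟫_ℝ) (Set.Ioc a b) := by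
    refine Integrable.mono' (hgnorm.mul_const B)
      (hg.aestronglyMeasurable.inner hymeas) ?_
    filter_upwards [ae_restrict_mem measurableSet_Ioc] with u hu
    calc ‖⟪g u, y u⟫_ℝ‖ ≤ ‖g u‖ * ‖y u‖ := norm_inner_le_norm _ _
      _ ≤ ‖g u‖ * B :=
        mul_le_mul_of_nonneg_left (hyB u (Set.Ioc_subset_Icc_self hu)) (norm_nonneg _)
  set C : ℝ := (2 * B + 1) / 2 + Ig + (B + 1) with hC
  have hCpos : 0 < C := by rw [hC]; linarith
  suffices hmain : ∀ ε : ℝ, 0 < ε → ε ≤ 1 →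
      |‖y b‖ ^ 2 / 2 - ‖y a‖ ^ 2 / 2 - ∫ u in a..b, ⟪g u, y u⟫_ℝ| ≤ ε * C by
    set D := ‖y b‖ ^ 2 / 2 - ‖y a‖ ^ 2 / 2 - ∫ u in a..b, ⟪g u, y u⟫_ℝ with hD
    have h0 : |D| ≤ 0 := by
      refine le_of_forall_pos_le_add fun δ hδ => ?_
      have hε : 0 < min 1 (δ / C) := lt_min one_pos (div_pos hδ hCpos)
      calc |D| ≤ min 1 (δ / C) * C := hmain _ hε (min_le_left _ _)
        _ ≤ δ / C * C := mul_le_mul_of_nonneg_right (min_le_right _ _) hCpos.le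
        _ = δ := div_mul_cancel₀ _ hCpos.ne'
        _ ≤ 0 + δ := by linarith
    have hD0 : D = 0 := abs_nonpos_iff.1 h0
    rw [hD] at hD0
    linarith
  intro ε hε hε1
  obtain ⟨φ, hφ, hφint⟩ := hGint.exists_boundedContinuous_integral_sub_le hε
  set z : ℝ → H := fun r => c + ∫ u in a..r, (φ : ℝ → H) u with hz
  have hzderiv : ∀ r : ℝ, HasDerivAt z ((φ : ℝ → H) r) r := fun r =>
    ((φ.continuous.integral_hasStrictDerivAt a r).hasDerivAt).const_add c
  have hzcont : Continuous z :=
    continuous_iff_continuousAt.2 fun r => (hzderiv r).continuousAt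
  have hza : z a = c := by simp [hz]
  have hFTC : ∫ u in a..b, ⟪(φ : ℝ → H) u, z u⟫_ℝ = ‖z b‖ ^ 2 / 2 - ‖z a‖ ^ 2 / 2 := by
    have hd : ∀ r : ℝ, HasDerivAt (fun t => ‖z t‖ ^ 2 / 2) ⟪(φ : ℝ → H) r, z r⟫_ℝ r := by
      intro r
      have h1 := ((hzderiv r).inner ℝ (hzderiv r)).div_const 2
      have h2 : (⟪z r, (φ : ℝ → H) r⟫_ℝ + ⟪(φ : ℝ → H) r, z r⟫_ℝ) / 2
          = ⟪(φ : ℝ → H) r, z r⟫_ℝ := by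
        rw [real_inner_comm (z r)]; ring
      rw [h2] at h1
      have h3 : (fun t => ⟪z t, z t⟫_ℝ / 2) = fun t => ‖z t‖ ^ 2 / 2 := by
        funext t; rw [real_inner_self_eq_norm_sq]
      rwa [h3] at h1
    rw [intervalIntegral.integral_eq_sub_of_hasDerivAt (fun u _ => hd u)
      ((φ.continuous.inner hzcont).intervalIntegrable a b)]
  have hφIoc : IntegrableOn (fun u => (φ : ℝ → H) u) (Set.Ioc a b) := hφint.integrableOn
  have hsubint : Integrable (fun u => G u - (φ : ℝ → H) u) := hGint.sub hφint
  have hyz : ∀ r ∈ Set.Icc a b, ‖y r - z r‖ ≤ ε := by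
    intro r hr
    have e1 : ∫ u in a..r, g u = ∫ u in Set.Ioc a r, G u := by
      rw [intervalIntegral.integral_of_le hr.1]
      refine setIntegral_congr_fun measurableSet_Ioc fun u hu => ?_
      exact (Set.indicator_of_mem (Set.Ioc_subset_Ioc_right hr.2 hu) g).symm
    have e2 : ∫ u in a..r, (φ : ℝ → H) u = ∫ u in Set.Ioc a r, (φ : ℝ → H) u :=
      intervalIntegral.integral_of_le hr.1
    have h1 : y r - z r = ∫ u in Set.Ioc a r, (G u - (φ : ℝ → H) u) := by
      rw [hy r hr]
      simp only [hz]
      rw [e1, e2, integral_sub hGint.integrableOn hφint.integrableOn]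
      abel
    rw [h1]
    calc ‖∫ u in Set.Ioc a r, (G u - (φ : ℝ → H) u)‖
        ≤ ∫ u in Set.Ioc a r, ‖G u - (φ : ℝ → H) u‖ := norm_integral_le_integral_norm _
      _ ≤ ∫ u, ‖G u - (φ : ℝ → H) u‖ :=
        setIntegral_le_integral hsubint.norm (Eventually.of_forall fun u => norm_nonneg _)
      _ ≤ ε := hφ
  have hzB : ∀ r ∈ Set.Icc a b, ‖z r‖ ≤ B + 1 := by
    intro r hr
    calc ‖z r‖ = ‖y r - (y r - z r)‖ := by congr 1; abel
      _ ≤ ‖y r‖ + ‖y r - z r‖ := norm_sub_le _ _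
      _ ≤ B + ε := add_le_add (hyB r hr) (hyz r hr)
      _ ≤ B + 1 := by linarith
  have hbmem : b ∈ Set.Icc a b := Set.right_mem_Icc.2 hab
  have hterm1 : |‖y b‖ ^ 2 / 2 - ‖z b‖ ^ 2 / 2| ≤ ε * ((2 * B + 1) / 2) := by
    have h1 : |‖y b‖ - ‖z b‖| ≤ ε := (abs_norm_sub_norm_le _ _).trans (hyz b hbmem)
    have h2 : ‖y b‖ ≤ B := hyB b hbmem
    have h3 : ‖z b‖ ≤ B + 1 := hzB b hbmem
    have h4 : (0:ℝ) ≤ ‖y b‖ := norm_nonneg _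
    have h5 : (0:ℝ) ≤ ‖z b‖ := norm_nonneg _
    have h6 := abs_le.1 h1
    rw [abs_le]
    constructor <;> nlinarith [h6.1, h6.2]
  have hsubnorm_le : ∫ u in Set.Ioc a b, ‖g u - (φ : ℝ → H) u‖ ≤ ε := by
    have e : ∀ u ∈ Set.Ioc a b, ‖g u - (φ : ℝ → H) u‖ = ‖G u - (φ : ℝ → H) u‖ := by
      intro u hu; rw [hG, Set.indicator_of_mem hu]
    calc ∫ u in Set.Ioc a b, ‖g u - (φ : ℝ → H) u‖
        = ∫ u in Set.Ioc a b, ‖G u - (φ : ℝ → H) u‖ :=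
        setIntegral_congr_fun measurableSet_Ioc e
      _ ≤ ∫ u, ‖G u - (φ : ℝ → H) u‖ :=
        setIntegral_le_integral hsubint.norm (Eventually.of_forall fun u => norm_nonneg _)
      _ ≤ ε := hφ
  have hφz_int : IntegrableOn (fun u => ⟪(φ : ℝ → H) u, z u⟫_ℝ) (Set.Ioc a b) :=
    (φ.continuous.inner hzcont).integrableOn_Ioc
  have hterm2 : |(∫ u in a..b, ⟪g u, y u⟫_ℝ) - ∫ u in a..b, ⟪(φ : ℝ → H) u, z u⟫_ℝ|
      ≤ ε * Ig + ε * (B + 1) := by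
    rw [intervalIntegral.integral_of_le hab, intervalIntegral.integral_of_le hab,
      ← integral_sub hinner_int hφz_int]
    have hd1 : IntegrableOn (fun u => ‖g u‖ * ε) (Set.Ioc a b) := hgnorm.mul_const ε
    have hd2 : IntegrableOn (fun u => ‖g u - (φ : ℝ → H) u‖ * (B + 1)) (Set.Ioc a b) := by
      exact ((hg.sub hφIoc).norm).mul_const (B + 1)
    have hdom : IntegrableOn
        (fun u => ‖g u‖ * ε + ‖g u - (φ : ℝ → H) u‖ * (B + 1)) (Set.Ioc a b) :=
      hd1.add hd2
    have habs : |∫ u in Set.Ioc a b, (⟪g u, y u⟫_ℝ - ⟪(φ : ℝ → H) u, z u⟫_ℝ)|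
        ≤ ∫ u in Set.Ioc a b, (‖g u‖ * ε + ‖g u - (φ : ℝ → H) u‖ * (B + 1)) := by
      rw [← Real.norm_eq_abs]
      refine (norm_integral_le_integral_norm _).trans ?_
      refine integral_mono_of_nonneg (Eventually.of_forall fun u => norm_nonneg _) hdom ?_
      filter_upwards [ae_restrict_mem measurableSet_Ioc] with u hu
      have hu' : u ∈ Set.Icc a b := Set.Ioc_subset_Icc_self hu
      have e : ⟪g u, y u⟫_ℝ - ⟪(φ : ℝ → H) u, z u⟫_ℝ
          = ⟪g u, y u - z u⟫_ℝ + ⟪g u - (φ : ℝ → H) u, z u⟫_ℝ := by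
        rw [inner_sub_right, inner_sub_left]; ring
      rw [e]
      calc ‖⟪g u, y u - z u⟫_ℝ + ⟪g u - (φ : ℝ → H) u, z u⟫_ℝ‖
          ≤ ‖⟪g u, y u - z u⟫_ℝ‖ + ‖⟪g u - (φ : ℝ → H) u, z u⟫_ℝ‖ := norm_add_le _ _
        _ ≤ ‖g u‖ * ‖y u - z u‖ + ‖g u - (φ : ℝ → H) u‖ * ‖z u‖ :=
          add_le_add (norm_inner_le_norm _ _) (norm_inner_le_norm _ _)
        _ ≤ ‖g u‖ * ε + ‖g u - (φ : ℝ → H) u‖ * (B + 1) :=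
          add_le_add (mul_le_mul_of_nonneg_left (hyz u hu') (norm_nonneg _))
            (mul_le_mul_of_nonneg_left (hzB u hu') (norm_nonneg _))
    refine habs.trans ?_
    rw [integral_add hd1 hd2, integral_mul_const, integral_mul_const]
    have h7 : (∫ u in Set.Ioc a b, ‖g u - (φ : ℝ → H) u‖) * (B + 1) ≤ ε * (B + 1) :=
      mul_le_mul_of_nonneg_right hsubnorm_le (by linarith)
    have h8 : (∫ u in Set.Ioc a b, ‖g u‖) * ε = ε * Ig := by rw [hIg]; ring
    linarith
  have hkey : ‖y b‖ ^ 2 / 2 - ‖y a‖ ^ 2 / 2 - ∫ u in a..b, ⟪g u, y u⟫_ℝ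
      = (‖y b‖ ^ 2 / 2 - ‖z b‖ ^ 2 / 2)
        - ((∫ u in a..b, ⟪g u, y u⟫_ℝ) - ∫ u in a..b, ⟪(φ : ℝ → H) u, z u⟫_ℝ) := by
    rw [hFTC, hya, hza]; ring
  rw [hkey, hC]
  calc |(‖y b‖ ^ 2 / 2 - ‖z b‖ ^ 2 / 2)
        - ((∫ u in a..b, ⟪g u, y u⟫_ℝ) - ∫ u in a..b, ⟪(φ : ℝ → H) u, z u⟫_ℝ)|
      ≤ |‖y b‖ ^ 2 / 2 - ‖z b‖ ^ 2 / 2|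
        + |(∫ u in a..b, ⟪g u, y u⟫_ℝ) - ∫ u in a..b, ⟪(φ : ℝ → H) u, z u⟫_ℝ| :=
      abs_sub _ _
    _ ≤ ε * ((2 * B + 1) / 2) + (ε * Ig + ε * (B + 1)) := add_le_add hterm1 hterm2
    _ = ε * ((2 * B + 1) / 2 + Ig + (B + 1)) := by ring

set_option maxHeartbeats 2000000 in
/-- For a trajectory solution `x` of (MTRIGS), each energy
`W_i(t) = f_i(x(t)) + (β/(2t^p))‖x(t)‖² + (1/2)‖ẋ(t)‖²` is differentiable at a.e. `t ≥ t₀` with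
`W_i'(t) ≤ −(pβ/(2t^{p+1}))‖x(t)‖² − (α/t^q)‖ẋ(t)‖² ≤ 0`; each `W_i` is nonincreasing on
`[t₀,∞)`; and `x(t) ∈ L(F, F(x(t₀)) + a)` for all `t ≥ t₀`, where
`a_i = (β/(2t₀^p))‖x(t₀)‖² + (1/2)‖ẋ(t₀)‖²`. -/
theorem stmt_10
    {H : Type*} [NormedAddCommGroup H] [InnerProductSpace ℝ H] [CompleteSpace H]
    {m : ℕ} (hm : 0 < m) (f : Fin m → H → ℝ)
    (hconv : ∀ i, ConvexOn ℝ Set.univ (f i))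
    (hdiff : ∀ i, Differentiable ℝ (f i))
    (hlip : ∀ i, ∃ L : ℝ≥0, LipschitzWith L (gradient (f i)))
    (t₀ α β q p : ℝ) (ht₀ : 0 < t₀) (hα : 0 < α) (hβ : 0 < β)
    (hq : q ∈ Set.Ioc (0:ℝ) 1) (hp : p ∈ Set.Ioc (0:ℝ) 2)
    (x x' x'' : ℝ → H)
    (hx : ∀ t ∈ Set.Ici t₀, HasDerivAt x (x' t) t)
    (hx'c : ContinuousOn x' (Set.Ici t₀))
    (hx''m : StronglyMeasurable x'')
    (hx'int : ∀ t ∈ Set.Ici t₀, x' t = x' t₀ + ∫ s in t₀..t, x'' s)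
    (hx'' : ∀ᵐ t ∂(volume.restrict (Set.Ici t₀)), HasDerivAt x' (x'' t) t)
    (hMTRIGS : ∀ᵐ t ∂(volume.restrict (Set.Ici t₀)),
      ((-(α / t ^ q)) • x' t ∈
        (fun g => g + (β / t ^ p) • x t + x'' t) ''
          (convexHull ℝ (Set.range fun i => gradient (f i) (x t)))) ∧
      (∀ w ∈ (fun g => g + (β / t ^ p) • x t + x'' t) ''
          (convexHull ℝ (Set.range fun i => gradient (f i) (x t))),
        ‖(α / t ^ q) • x' t‖ ≤ ‖w‖)) :
    (∀ i : Fin m, ∀ᵐ t ∂(volume.restrict (Set.Ici t₀)), ∃ d : ℝ,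
      HasDerivAt (fun s => f i (x s) + β / (2 * s ^ p) * ‖x s‖ ^ 2
        + (1/2) * ‖x' s‖ ^ 2) d t ∧
      d ≤ -(p * β / (2 * t ^ (p + 1))) * ‖x t‖ ^ 2 - α / t ^ q * ‖x' t‖ ^ 2 ∧
      -(p * β / (2 * t ^ (p + 1))) * ‖x t‖ ^ 2 - α / t ^ q * ‖x' t‖ ^ 2 ≤ 0) ∧
    (∀ i : Fin m, AntitoneOn
      (fun s => f i (x s) + β / (2 * s ^ p) * ‖x s‖ ^ 2 + (1/2) * ‖x' s‖ ^ 2)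
      (Set.Ici t₀)) ∧
    (∀ t ∈ Set.Ici t₀, ∀ i : Fin m, f i (x t) ≤ f i (x t₀)
      + (β / (2 * t₀ ^ p) * ‖x t₀‖ ^ 2 + (1/2) * ‖x' t₀‖ ^ 2)) := by
  obtain ⟨hq0, hq1⟩ := hq
  obtain ⟨hp0, hp2⟩ := hp
  have hIci : MeasurableSet (Set.Ici t₀) := measurableSet_Ici
  have hxc : ContinuousOn x (Set.Ici t₀) := fun t ht =>
    (hx t ht).continuousAt.continuousWithinAt
  have hgradc : ∀ i : Fin m, Continuous (gradient (f i)) := fun i =>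
    (hlip i).choose_spec.continuous
  -- derivatives of the C¹ part
  have hA2 : ∀ t : ℝ, 0 < t → HasDerivAt (fun s : ℝ => β / (2 * s ^ p))
      (-(p * β / (2 * t ^ (p + 1)))) t := by
    intro t ht
    have htp : (0:ℝ) < t ^ p := Real.rpow_pos_of_pos ht p
    have h0 : HasDerivAt (fun s : ℝ => s ^ p) (p * t ^ (p - 1)) t :=
      Real.hasDerivAt_rpow_const (Or.inl ht.ne')
    have h1 : HasDerivAt (fun s : ℝ => 2 * s ^ p) (2 * (p * t ^ (p - 1))) t := h0.const_mul 2
    have h2 : (2 : ℝ) * t ^ p ≠ 0 := by positivity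
    have h3 := (hasDerivAt_const t β).div h1 h2
    refine h3.congr_deriv ?_
    have e1 : t ^ (p - 1) = t ^ p / t := by
      rw [Real.rpow_sub ht, Real.rpow_one]
    have e2 : t ^ (p + 1) = t ^ p * t := by
      rw [Real.rpow_add ht, Real.rpow_one]
    rw [e1, e2]
    field_simp
    ring
  have hA3 : ∀ t ∈ Set.Ici t₀, HasDerivAt (fun s => ‖x s‖ ^ 2) (2 * ⟪x t, x' t⟫_ℝ) t := by
    intro t ht
    have h := (hx t ht).inner ℝ (hx t ht)
    have e : (fun s => ⟪x s, x s⟫_ℝ) = fun s => ‖x s‖ ^ 2 := by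
      funext s; rw [real_inner_self_eq_norm_sq]
    rw [e] at h
    refine h.congr_deriv ?_
    rw [real_inner_comm]; ring
  have hA1 : ∀ i : Fin m, ∀ t ∈ Set.Ici t₀,
      HasDerivAt (fun s => f i (x s)) ⟪gradient (f i) (x t), x' t⟫_ℝ t := by
    intro i t ht
    have hgt : HasGradientAt (f i) (gradient (f i) (x t)) (x t) :=
      ((hdiff i) (x t)).hasGradientAt
    rw [hasGradientAt_iff_hasFDerivAt] at hgt
    have h := hgt.comp_hasDerivAt t (hx t ht)
    exact h
  set DA : Fin m → ℝ → ℝ := fun i u => ⟪gradient (f i) (x u), x' u⟫_ℝ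
      + (-(p * β / (2 * u ^ (p + 1))) * ‖x u‖ ^ 2
        + β / (2 * u ^ p) * (2 * ⟪x u, x' u⟫_ℝ)) with hDA
  have hAderiv : ∀ i : Fin m, ∀ u ∈ Set.Ici t₀,
      HasDerivAt (fun r => f i (x r) + β / (2 * r ^ p) * ‖x r‖ ^ 2) (DA i u) u := by
    intro i u hu
    exact (hA1 i u hu).add ((hA2 u (lt_of_lt_of_le ht₀ hu)).mul (hA3 u hu))
  have hrpowc : ∀ r : ℝ, ContinuousOn (fun u : ℝ => u ^ r) (Set.Ici t₀) := fun r u hu =>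
    (Real.continuousAt_rpow_const u r (Or.inl (lt_of_lt_of_le ht₀ hu).ne')).continuousWithinAt
  have hgradxc : ∀ i : Fin m, ContinuousOn (fun u => gradient (f i) (x u)) (Set.Ici t₀) :=
    fun i => (hgradc i).comp_continuousOn hxc
  have hDAc : ∀ i : Fin m, ContinuousOn (DA i) (Set.Ici t₀) := by
    intro i
    rw [hDA]
    refine ContinuousOn.add (ContinuousOn.inner (hgradxc i) hx'c) (ContinuousOn.add ?_ ?_)
    · refine ContinuousOn.mul (ContinuousOn.neg ?_) ((hxc.norm).pow 2)
      exact ContinuousOn.div continuousOn_const (continuousOn_const.mul (hrpowc (p + 1)))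
        (fun u hu => by
          have : (0:ℝ) < u ^ (p+1) := Real.rpow_pos_of_pos (lt_of_lt_of_le ht₀ hu) _
          positivity)
    · exact ContinuousOn.mul
        (ContinuousOn.div continuousOn_const (continuousOn_const.mul (hrpowc p))
          (fun u hu => by
            have : (0:ℝ) < u ^ p := Real.rpow_pos_of_pos (lt_of_lt_of_le ht₀ hu) _
            positivity))
        ((ContinuousOn.inner hxc hx'c).const_smul (2:ℝ))
  -- a.e. inner-product inequality from MTRIGS
  have hkey : ∀ᵐ t ∂(volume.restrict (Set.Ici t₀)), ∀ i : Fin m,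
      ⟪gradient (f i) (x t) + (β / t ^ p) • x t + x'' t, x' t⟫_ℝ
        ≤ -(α / t ^ q) * ‖x' t‖ ^ 2 := by
    filter_upwards [hMTRIGS, ae_restrict_mem hIci] with t hMT ht
    intro i
    have ht0 : (0:ℝ) < t := lt_of_lt_of_le ht₀ ht
    have hr : (0:ℝ) < α / t ^ q := div_pos hα (Real.rpow_pos_of_pos ht0 q)
    obtain ⟨hvK, hmin⟩ := hMT
    set Kset := (fun g => g + (β / t ^ p) • x t + x'' t) ''
      (convexHull ℝ (Set.range fun i => gradient (f i) (x t))) with hKset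
    set v : H := (-(α / t ^ q)) • x' t with hv
    have hKconv : Convex ℝ Kset := by
      have e : (fun g : H => g + (β / t ^ p) • x t + x'' t)
          = fun g : H => ((β / t ^ p) • x t + x'' t) + g := by
        funext g; abel
      rw [hKset, e]
      exact (convex_convexHull ℝ _).translate _
    set w : H := gradient (f i) (x t) + (β / t ^ p) • x t + x'' t with hw
    have hwK : w ∈ Kset :=
      ⟨gradient (f i) (x t), subset_convexHull ℝ _ ⟨i, rfl⟩, rfl⟩
    have hnv : ‖v‖ = ‖(α / t ^ q) • x' t‖ := by rw [hv, neg_smul, norm_neg]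
    have hvar : 0 ≤ ⟪v, w - v⟫_ℝ := by
      by_contra hneg
      push_neg at hneg
      set u : H := w - v with hu
      have hu0 : u ≠ 0 := by
        intro h0
        rw [h0, inner_zero_right] at hneg
        exact lt_irrefl 0 hneg
      have hu2 : (0:ℝ) < ‖u‖ ^ 2 := pow_pos (norm_pos_iff.2 hu0) 2
      set σ : ℝ := min 1 (-(⟪v, u⟫_ℝ) / ‖u‖ ^ 2) with hσ
      have hσ0 : 0 < σ := lt_min one_pos (div_pos (neg_pos.2 hneg) hu2)
      have hσ1 : σ ≤ 1 := min_le_left _ _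
      have hvs : v + σ • u ∈ Kset := by
        have h1 := hKconv hvK hwK (by linarith : (0:ℝ) ≤ 1 - σ) hσ0.le (by ring)
        have e : (1 - σ) • v + σ • w = v + σ • u := by
          rw [hu, smul_sub, sub_smul, one_smul]; abel
        rwa [e] at h1
      have hnorm : ‖v‖ ≤ ‖v + σ • u‖ := by
        rw [hnv]; exact hmin _ hvs
      have hsq : ‖v‖ ^ 2 ≤ ‖v + σ • u‖ ^ 2 := pow_le_pow_left₀ (norm_nonneg _) hnorm 2
      have hexp : ‖v + σ • u‖ ^ 2 = ‖v‖ ^ 2 + 2 * (σ * ⟪v, u⟫_ℝ) + σ ^ 2 * ‖u‖ ^ 2 := by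
        have e9 : ‖σ • u‖ ^ 2 = σ ^ 2 * ‖u‖ ^ 2 := by
          rw [norm_smul, Real.norm_eq_abs, abs_of_pos hσ0, mul_pow]
        rw [norm_add_sq_real, real_inner_smul_right, e9]
      have hσ2 : σ * ‖u‖ ^ 2 ≤ -(⟪v, u⟫_ℝ) := by
        have h5 := min_le_right 1 (-(⟪v, u⟫_ℝ) / ‖u‖ ^ 2)
        calc σ * ‖u‖ ^ 2 ≤ -(⟪v, u⟫_ℝ) / ‖u‖ ^ 2 * ‖u‖ ^ 2 :=
              mul_le_mul_of_nonneg_right h5 hu2.le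
          _ = -(⟪v, u⟫_ℝ) := div_mul_cancel₀ _ hu2.ne'
      nlinarith [mul_le_mul_of_nonneg_left hσ2 hσ0.le, hsq, hexp,
        mul_pos hσ0 (neg_pos.2 hneg)]
    have h1 : ‖v‖ ^ 2 ≤ ⟪v, w⟫_ℝ := by
      rw [inner_sub_right, real_inner_self_eq_norm_sq] at hvar
      linarith
    have h2 : ⟪v, w⟫_ℝ = -(α / t ^ q) * ⟪x' t, w⟫_ℝ := by
      rw [hv, real_inner_smul_left]
    have h3 : ‖v‖ ^ 2 = (α / t ^ q) ^ 2 * ‖x' t‖ ^ 2 := by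
      rw [hv, norm_smul, Real.norm_eq_abs, abs_neg, abs_of_pos hr, mul_pow]
    rw [h2, h3] at h1
    have h4 : ⟪x' t, w⟫_ℝ ≤ -(α / t ^ q) * ‖x' t‖ ^ 2 := by
      by_contra hc
      push_neg at hc
      have h5 := mul_lt_mul_of_pos_left hc hr
      nlinarith [h1]
    calc ⟪w, x' t⟫_ℝ = ⟪x' t, w⟫_ℝ := real_inner_comm _ _
      _ ≤ -(α / t ^ q) * ‖x' t‖ ^ 2 := h4
  -- a.e. bound on x''
  have hbound : ∀ᵐ t ∂(volume.restrict (Set.Ici t₀)),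
      ‖x'' t‖ ≤ α / t ^ q * ‖x' t‖ + β / t ^ p * ‖x t‖
        + ∑ j : Fin m, ‖gradient (f j) (x t)‖ := by
    filter_upwards [hMTRIGS, ae_restrict_mem hIci] with t hMT ht
    have ht0 : (0:ℝ) < t := lt_of_lt_of_le ht₀ ht
    obtain ⟨⟨g, hgH, hgeq⟩, -⟩ := hMT
    have hx''eq : x'' t = (-(α / t ^ q)) • x' t - (β / t ^ p) • x t - g := by
      have h9 : g + (β / t ^ p) • x t + x'' t = (-(α / t ^ q)) • x' t := by
        simpa using hgeq
      rw [← h9]; abel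
    have hgn : ‖g‖ ≤ ∑ j : Fin m, ‖gradient (f j) (x t)‖ := by
      have hsub : convexHull ℝ (Set.range fun i => gradient (f i) (x t)) ⊆
          Metric.closedBall 0 (∑ j : Fin m, ‖gradient (f j) (x t)‖) := by
        refine convexHull_min ?_ (convex_closedBall _ _)
        rintro y ⟨j, rfl⟩
        rw [Metric.mem_closedBall, dist_zero_right]
        exact Finset.single_le_sum (f := fun j : Fin m => ‖gradient (f j) (x t)‖)
          (fun j _ => norm_nonneg _) (Finset.mem_univ j)
      have h6 := hsub hgH
      rwa [Metric.mem_closedBall, dist_zero_right] at h6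
    have hq' : |(-(α / t ^ q))| = α / t ^ q := by
      rw [abs_neg, abs_of_pos (div_pos hα (Real.rpow_pos_of_pos ht0 q))]
    have hp' : |β / t ^ p| = β / t ^ p :=
      abs_of_pos (div_pos hβ (Real.rpow_pos_of_pos ht0 p))
    calc ‖x'' t‖ ≤ ‖(-(α / t ^ q)) • x' t - (β / t ^ p) • x t‖ + ‖g‖ := by
          rw [hx''eq]; exact norm_sub_le _ _
      _ ≤ ‖(-(α / t ^ q)) • x' t‖ + ‖(β / t ^ p) • x t‖ + ‖g‖ :=
          add_le_add_left (norm_sub_le _ _) _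
      _ ≤ α / t ^ q * ‖x' t‖ + β / t ^ p * ‖x t‖
          + ∑ j : Fin m, ‖gradient (f j) (x t)‖ := by
          rw [norm_smul, norm_smul, Real.norm_eq_abs, Real.norm_eq_abs, hq', hp']
          exact add_le_add le_rfl hgn
  set Mfun : ℝ → ℝ := fun t => α / t ^ q * ‖x' t‖ + β / t ^ p * ‖x t‖
      + ∑ j : Fin m, ‖gradient (f j) (x t)‖ with hMfun
  have hMc : ContinuousOn Mfun (Set.Ici t₀) := by
    rw [hMfun]
    refine ContinuousOn.add (ContinuousOn.add ?_ ?_) ?_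
    · exact (ContinuousOn.div continuousOn_const (hrpowc q)
        (fun u hu => (Real.rpow_pos_of_pos (lt_of_lt_of_le ht₀ hu) q).ne')).mul hx'c.norm
    · exact (ContinuousOn.div continuousOn_const (hrpowc p)
        (fun u hu => (Real.rpow_pos_of_pos (lt_of_lt_of_le ht₀ hu) p).ne')).mul hxc.norm
    · have hcont : Continuous fun y : H => ∑ j : Fin m, ‖gradient (f j) y‖ :=
        continuous_finset_sum _ fun j _ => (hgradc j).norm
      exact hcont.comp_continuousOn hxc
  have hx''II : ∀ a b : ℝ, t₀ ≤ a → a ≤ b → IntegrableOn x'' (Set.Ioc a b) := by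
    intro a b ha hab2
    have hsub : Set.Ioc a b ⊆ Set.Ici t₀ := fun u hu => le_trans ha hu.1.le
    have hIccsub : Set.Icc a b ⊆ Set.Ici t₀ := fun u hu => le_trans ha hu.1
    have hMint : IntegrableOn Mfun (Set.Ioc a b) :=
      ((hMc.mono hIccsub).integrableOn_Icc).mono_set Set.Ioc_subset_Icc_self
    refine Integrable.mono' hMint hx''m.aestronglyMeasurable ?_
    exact ae_restrict_of_ae_restrict_of_subset hsub hbound
  -- nonpositivity of the bound
  have hRHS_nonpos : ∀ t ∈ Set.Ici t₀,
      -(p * β / (2 * t ^ (p + 1))) * ‖x t‖ ^ 2 - α / t ^ q * ‖x' t‖ ^ 2 ≤ 0 := by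
    intro t ht
    have ht0 : (0:ℝ) < t := lt_of_lt_of_le ht₀ ht
    have hpp : (0:ℝ) < t ^ (p + 1) := Real.rpow_pos_of_pos ht0 _
    have hqq : (0:ℝ) < t ^ q := Real.rpow_pos_of_pos ht0 _
    have h1 : 0 ≤ p * β / (2 * t ^ (p + 1)) * ‖x t‖ ^ 2 :=
      mul_nonneg (div_nonneg (mul_nonneg hp0.le hβ.le) (by linarith)) (sq_nonneg _)
    have h2 : 0 ≤ α / t ^ q * ‖x' t‖ ^ 2 :=
      mul_nonneg (div_nonneg hα.le hqq.le) (sq_nonneg _)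
    linarith
  have hsum_le : ∀ᵐ u ∂(volume.restrict (Set.Ici t₀)), ∀ i : Fin m,
      DA i u + ⟪x'' u, x' u⟫_ℝ
        ≤ -(p * β / (2 * u ^ (p + 1))) * ‖x u‖ ^ 2 - α / u ^ q * ‖x' u‖ ^ 2 := by
    filter_upwards [hkey, ae_restrict_mem hIci] with u hk hu
    intro i
    have hu0 : (0:ℝ) < u := lt_of_lt_of_le ht₀ hu
    have hup : (u:ℝ) ^ p ≠ 0 := (Real.rpow_pos_of_pos hu0 p).ne'
    have he : DA i u + ⟪x'' u, x' u⟫_ℝ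
        = ⟪gradient (f i) (x u) + (β / u ^ p) • x u + x'' u, x' u⟫_ℝ
          - p * β / (2 * u ^ (p + 1)) * ‖x u‖ ^ 2 := by
      simp only [hDA]
      rw [inner_add_left, inner_add_left, real_inner_smul_left]
      field_simp
      ring
    rw [he]
    have h7 := hk i
    linarith
  -- Bullet 1
  have bullet1 : ∀ i : Fin m, ∀ᵐ t ∂(volume.restrict (Set.Ici t₀)), ∃ d : ℝ,
      HasDerivAt (fun s => f i (x s) + β / (2 * s ^ p) * ‖x s‖ ^ 2
        + (1/2) * ‖x' s‖ ^ 2) d t ∧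
      d ≤ -(p * β / (2 * t ^ (p + 1))) * ‖x t‖ ^ 2 - α / t ^ q * ‖x' t‖ ^ 2 ∧
      -(p * β / (2 * t ^ (p + 1))) * ‖x t‖ ^ 2 - α / t ^ q * ‖x' t‖ ^ 2 ≤ 0 := by
    intro i
    filter_upwards [hx'', hsum_le, ae_restrict_mem hIci] with t hxd hsum ht
    refine ⟨DA i t + ⟪x'' t, x' t⟫_ℝ, ?_, hsum i, hRHS_nonpos t ht⟩
    have hhalf : HasDerivAt (fun s => (1/2 : ℝ) * ‖x' s‖ ^ 2) ⟪x'' t, x' t⟫_ℝ t := by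
      have h := hxd.inner ℝ hxd
      have e : (fun s => ⟪x' s, x' s⟫_ℝ) = fun s => ‖x' s‖ ^ 2 := by
        funext s; rw [real_inner_self_eq_norm_sq]
      rw [e] at h
      have h2 := h.const_mul (1/2 : ℝ)
      refine h2.congr_deriv ?_
      rw [real_inner_comm]; ring
    exact (hAderiv i t ht).add hhalf
  -- Bullet 2
  have bullet2 : ∀ i : Fin m, AntitoneOn
      (fun s => f i (x s) + β / (2 * s ^ p) * ‖x s‖ ^ 2 + (1/2) * ‖x' s‖ ^ 2)
      (Set.Ici t₀) := by
    intro i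
    intro a ha b hb hab
    simp only
    have ha' : t₀ ≤ a := ha
    have hsub : Set.Ioc a b ⊆ Set.Ici t₀ := fun u hu => le_trans ha' hu.1.le
    have hIccIci : Set.Icc a b ⊆ Set.Ici t₀ := fun u hu => le_trans ha' hu.1
    have hy' : ∀ r ∈ Set.Icc a b, x' r = x' a + ∫ u in a..r, x'' u := by
      intro r hr
      have htr : t₀ ≤ r := le_trans ha' hr.1
      have h3 : (∫ u in t₀..r, x'' u) - ∫ u in t₀..a, x'' u = ∫ u in a..r, x'' u :=
        intervalIntegral.integral_interval_sub_left
          ((intervalIntegrable_iff_integrableOn_Ioc_of_le htr).2 (hx''II t₀ r le_rfl htr))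
          ((intervalIntegrable_iff_integrableOn_Ioc_of_le ha').2 (hx''II t₀ a le_rfl ha'))
      rw [hx'int r htr, hx'int a ha', ← h3]
      abel
    have hphi := key_ac x'' a b hab (x' a) (hx''II a b ha' hab) x' hy'
    have hxa : x' a = x' a + ∫ u in a..a, x'' u := by simp
    rw [show x' a = x' a from rfl] at hphi
    have huIcc : Set.uIcc a b = Set.Icc a b := Set.uIcc_of_le hab
    have hAder' : ∀ u ∈ Set.uIcc a b,
        HasDerivAt (fun r => f i (x r) + β / (2 * r ^ p) * ‖x r‖ ^ 2) (DA i u) u := by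
      intro u hu
      exact hAderiv i u (hIccIci (huIcc ▸ hu))
    have hDAi : IntervalIntegrable (DA i) volume a b := by
      apply ContinuousOn.intervalIntegrable
      rw [huIcc]
      exact (hDAc i).mono hIccIci
    have hFTCA := intervalIntegral.integral_eq_sub_of_hasDerivAt hAder' hDAi
    have hx'm : AEStronglyMeasurable x' (volume.restrict (Set.Ioc a b)) :=
      ((hx'c.mono hsub)).aestronglyMeasurable measurableSet_Ioc
    have hIP : IntegrableOn (fun u => ⟪x'' u, x' u⟫_ℝ) (Set.Ioc a b) := by
      have hd : IntegrableOn (fun u => Mfun u * ‖x' u‖) (Set.Ioc a b) :=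
        (((hMc.mono hIccIci).mul (hx'c.mono hIccIci).norm).integrableOn_Icc).mono_set
          Set.Ioc_subset_Icc_self
      refine Integrable.mono' hd (hx''m.aestronglyMeasurable.inner hx'm) ?_
      filter_upwards [ae_restrict_of_ae_restrict_of_subset hsub hbound] with u hbu
      calc ‖⟪x'' u, x' u⟫_ℝ‖ ≤ ‖x'' u‖ * ‖x' u‖ := norm_inner_le_norm _ _
        _ ≤ Mfun u * ‖x' u‖ := mul_le_mul_of_nonneg_right hbu (norm_nonneg _)
    have hIPii : IntervalIntegrable (fun u => ⟪x'' u, x' u⟫_ℝ) volume a b :=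
      (intervalIntegrable_iff_integrableOn_Ioc_of_le hab).2 hIP
    have hsplit : ∫ u in a..b, (DA i u + ⟪x'' u, x' u⟫_ℝ)
        = (∫ u in a..b, DA i u) + ∫ u in a..b, ⟪x'' u, x' u⟫_ℝ :=
      intervalIntegral.integral_add hDAi hIPii
    have hneg : ∫ u in a..b, (DA i u + ⟪x'' u, x' u⟫_ℝ) ≤ 0 := by
      rw [intervalIntegral.integral_of_le hab]
      refine integral_nonpos_of_ae ?_
      filter_upwards [ae_restrict_of_ae_restrict_of_subset hsub hsum_le,
        ae_restrict_of_ae_restrict_of_subset hsub (ae_restrict_mem hIci)] with u h1 h2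
      exact le_trans (h1 i) (hRHS_nonpos u h2)
    have hWdiff : (f i (x b) + β / (2 * b ^ p) * ‖x b‖ ^ 2 + (1/2) * ‖x' b‖ ^ 2)
        - (f i (x a) + β / (2 * a ^ p) * ‖x a‖ ^ 2 + (1/2) * ‖x' a‖ ^ 2)
        = ∫ u in a..b, (DA i u + ⟪x'' u, x' u⟫_ℝ) := by
      rw [hsplit, hFTCA]
      rw [← hphi]
      ring
    linarith [hneg, hWdiff.le, hWdiff.ge]
  refine ⟨bullet1, bullet2, ?_⟩
  intro t ht i
  have h := bullet2 i Set.self_mem_Ici ht ht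
  simp only at h
  have ht0 : (0:ℝ) < t := lt_of_lt_of_le ht₀ ht
  have htp : (0:ℝ) < t ^ p := Real.rpow_pos_of_pos ht0 p
  have h1 : 0 ≤ β / (2 * t ^ p) * ‖x t‖ ^ 2 :=
    mul_nonneg (div_nonneg hβ.le (by linarith)) (sq_nonneg _)
  have h2 : 0 ≤ (1/2 : ℝ) * ‖x' t‖ ^ 2 := by positivity
  linarith
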